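/- There exists a constant C > 0 depending only on β, C_b, C_c, C_f, γ_b, γ_c, γ_f and C₀ (in particular independent of ε₁ and ε₂) such that ‖u'‖_{∞,I} ≤ C · max{ε₁⁻¹, ε₂⁻¹}. -/
import Mathlib

open intervalIntegral Set

theorem stmt_0 (β C_b C_c C_f γ_b γ_c γ_f C₀ : ℝ)
    (hβ : 0 < β) (hCb : 0 < C_b) (hCc : 0 < C_c) (hCf : 0 < C_f)
    (hgb : 0 < γ_b) (hgc : 0 < γ_c) (hgf : 0 < γ_f) (hC₀ : 0 < C₀) :
    ∃ C : ℝ, 0 < C ∧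
      ∀ ε₁ ε₂ : ℝ, ε₁ ∈ Set.Ioc (0:ℝ) 1 → ε₂ ∈ Set.Ioc (0:ℝ) 1 →
      ∀ b c f u u' u'' : ℝ → ℝ,
        AnalyticOnNhd ℝ b (Set.Icc 0 1) →
        AnalyticOnNhd ℝ c (Set.Icc 0 1) →
        AnalyticOnNhd ℝ f (Set.Icc 0 1) →
        (∀ n : ℕ, ∀ x ∈ Set.Icc (0:ℝ) 1, |iteratedDeriv n b x| ≤ C_b * n.factorial * γ_b ^ n) →
        (∀ n : ℕ, ∀ x ∈ Set.Icc (0:ℝ) 1, |iteratedDeriv n c x| ≤ C_c * n.factorial * γ_c ^ n) →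
        (∀ n : ℕ, ∀ x ∈ Set.Icc (0:ℝ) 1, |iteratedDeriv n f x| ≤ C_f * n.factorial * γ_f ^ n) →
        (∀ x ∈ Set.Icc (0:ℝ) 1, β ≤ b x) →
        (∃ γ : ℝ, 0 < γ ∧ ∀ x ∈ Set.Icc (0:ℝ) 1, γ ≤ c x) →
        (∃ ρ : ℝ, 0 < ρ ∧ ∀ x ∈ Set.Icc (0:ℝ) 1, ρ ≤ c x - ε₂ / 2 * deriv b x) →
        (∀ x ∈ Set.Icc (0:ℝ) 1, HasDerivWithinAt u (u' x) (Set.Icc 0 1) x) →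
        (∀ x ∈ Set.Icc (0:ℝ) 1, HasDerivWithinAt u' (u'' x) (Set.Icc 0 1) x) →
        ContinuousOn u'' (Set.Icc 0 1) →
        (∀ x ∈ Set.Ioo (0:ℝ) 1, -ε₁ * u'' x + ε₂ * b x * u' x + c x * u x = f x) →
        u 0 = 0 → u 1 = 0 →
        (∀ x ∈ Set.Icc (0:ℝ) 1, |u x| ≤ C₀) →
        ∀ x ∈ Set.Ioo (0:ℝ) 1, |u' x| ≤ C * max ε₁⁻¹ ε₂⁻¹ := by
  refine ⟨2 * C_b * C₀ + C_b * γ_b * C₀ + C_c * C₀ + C_f, by positivity, ?_⟩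
  intro ε₁ ε₂ hε₁ hε₂ b c f u u' u'' hb hc hf hbB hcB hfB hbβ hγ hρ hu hu' hu''c heq h0 h1 hC₀u x hx
  set C : ℝ := 2 * C_b * C₀ + C_b * γ_b * C₀ + C_c * C₀ + C_f with hCdef
  -- pointwise bounds
  have hbb : ∀ y ∈ Set.Icc (0:ℝ) 1, |b y| ≤ C_b := by
    intro y hy; have := hbB 0 y hy; simpa using this
  have hb'b : ∀ y ∈ Set.Icc (0:ℝ) 1, |deriv b y| ≤ C_b * γ_b := by
    intro y hy; have := hbB 1 y hy; simpa [iteratedDeriv_one] using this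
  have hcb : ∀ y ∈ Set.Icc (0:ℝ) 1, |c y| ≤ C_c := by
    intro y hy; have := hcB 0 y hy; simpa using this
  have hfb : ∀ y ∈ Set.Icc (0:ℝ) 1, |f y| ≤ C_f := by
    intro y hy; have := hfB 0 y hy; simpa using this
  -- Rolle point
  have hcontu : ContinuousOn u (Set.Icc 0 1) := fun y hy => (hu y hy).continuousWithinAt
  have hderu : ∀ y ∈ Set.Ioo (0:ℝ) 1, HasDerivAt u (u' y) y := fun y hy =>
    (hu y (Set.Ioo_subset_Icc_self hy)).hasDerivAt (Icc_mem_nhds hy.1 hy.2)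
  obtain ⟨ξ, hξ, hξ0⟩ := exists_hasDerivAt_eq_zero zero_lt_one hcontu (h0.trans h1.symm) hderu
  -- the interval [x, ξ]
  have hJ : Set.uIcc x ξ ⊆ Set.Ioo (0:ℝ) 1 := Set.ordConnected_Ioo.uIcc_subset hx hξ
  have hJ' : Set.uIcc x ξ ⊆ Set.Icc (0:ℝ) 1 := hJ.trans Set.Ioo_subset_Icc_self
  have hderu' : ∀ t ∈ Set.uIcc x ξ, HasDerivAt u' (u'' t) t := fun t ht =>
    (hu' t (hJ' ht)).hasDerivAt (Icc_mem_nhds (hJ ht).1 (hJ ht).2)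
  have hderuJ : ∀ t ∈ Set.uIcc x ξ, HasDerivAt u (u' t) t := fun t ht => hderu t (hJ ht)
  have hderbJ : ∀ t ∈ Set.uIcc x ξ, HasDerivAt b (deriv b t) t := fun t ht =>
    ((hb t (hJ' ht)).differentiableAt).hasDerivAt
  -- continuity facts
  have hcontu' : ContinuousOn u' (Set.Icc 0 1) := fun y hy => (hu' y hy).continuousWithinAt
  have hcb' : ContinuousOn (deriv b) (Set.Icc 0 1) := hb.deriv.continuousOn
  have hib' : IntervalIntegrable (deriv b) MeasureTheory.volume x ξ :=
    (hcb'.mono hJ').intervalIntegrable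
  have hiu' : IntervalIntegrable u' MeasureTheory.volume x ξ :=
    (hcontu'.mono hJ').intervalIntegrable
  have hiu'' : IntervalIntegrable u'' MeasureTheory.volume x ξ :=
    (hu''c.mono hJ').intervalIntegrable
  -- FTC
  have hFTC : ∫ t in x..ξ, u'' t = u' ξ - u' x :=
    integral_eq_sub_of_hasDerivAt hderu' hiu''
  -- rewrite u'' via the equation
  have hequ'' : ∀ t ∈ Set.uIcc x ξ, ε₁ * u'' t = ε₂ * b t * u' t + c t * u t - f t := by
    intro t ht
    have := heq t (hJ ht)
    linarith
  have hε₁0 : (0:ℝ) < ε₁ := hε₁.1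
  have hε₂0 : (0:ℝ) < ε₂ := hε₂.1
  -- integration by parts for b * u'
  have hIBP : ∫ t in x..ξ, b t * u' t
      = b ξ * u ξ - b x * u x - ∫ t in x..ξ, deriv b t * u t :=
    integral_mul_deriv_eq_deriv_mul hderbJ hderuJ hib' hiu'
  -- main identity
  have hmain : ε₁ * (u' ξ - u' x)
      = ε₂ * (b ξ * u ξ - b x * u x - ∫ t in x..ξ, deriv b t * u t)
        + ∫ t in x..ξ, (c t * u t - f t) := by
    have h1' : ε₁ * (u' ξ - u' x) = ∫ t in x..ξ, ε₁ * u'' t := by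
      rw [intervalIntegral.integral_const_mul, hFTC]
    rw [h1', intervalIntegral.integral_congr hequ'']
    have hspl : ∫ t in x..ξ, (ε₂ * b t * u' t + c t * u t - f t)
        = (∫ t in x..ξ, ε₂ * (b t * u' t)) + ∫ t in x..ξ, (c t * u t - f t) := by
      have hicu : IntervalIntegrable (fun t => c t * u t - f t) MeasureTheory.volume x ξ := by
        apply ContinuousOn.intervalIntegrable
        exact (((hc.continuousOn.mono hJ').mul (hcontu.mono hJ')).sub (hf.continuousOn.mono hJ'))
      have hibu : IntervalIntegrable (fun t => ε₂ * (b t * u' t)) MeasureTheory.volume x ξ := by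
        apply ContinuousOn.intervalIntegrable
        exact (continuousOn_const.mul ((hb.continuousOn.mono hJ').mul (hcontu'.mono hJ')))
      rw [← intervalIntegral.integral_add hibu hicu]
      exact intervalIntegral.integral_congr fun t _ => by ring
    rw [hspl, intervalIntegral.integral_const_mul, hIBP]
  -- bound the terms
  have hdist : |ξ - x| ≤ 1 := by
    rw [abs_sub_le_iff]
    constructor <;> nlinarith [hξ.1, hξ.2, hx.1, hx.2]
  have hbd1 : |∫ t in x..ξ, deriv b t * u t| ≤ C_b * γ_b * C₀ := by
    have : |∫ t in x..ξ, deriv b t * u t| ≤ C_b * γ_b * C₀ * |ξ - x| := by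
      rw [← Real.norm_eq_abs]
      apply intervalIntegral.norm_integral_le_of_norm_le_const
      intro t ht
      have ht' : t ∈ Set.Icc (0:ℝ) 1 := hJ' (Set.uIoc_subset_uIcc ht)
      rw [Real.norm_eq_abs, abs_mul]
      exact mul_le_mul (hb'b t ht') (hC₀u t ht') (abs_nonneg _) (by positivity)
    calc |∫ t in x..ξ, deriv b t * u t| ≤ C_b * γ_b * C₀ * |ξ - x| := this
      _ ≤ C_b * γ_b * C₀ * 1 := by
          apply mul_le_mul_of_nonneg_left hdist (by positivity)
      _ = C_b * γ_b * C₀ := by ring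
  have hbd2 : |∫ t in x..ξ, (c t * u t - f t)| ≤ C_c * C₀ + C_f := by
    have : |∫ t in x..ξ, (c t * u t - f t)| ≤ (C_c * C₀ + C_f) * |ξ - x| := by
      rw [← Real.norm_eq_abs]
      apply intervalIntegral.norm_integral_le_of_norm_le_const
      intro t ht
      have ht' : t ∈ Set.Icc (0:ℝ) 1 := hJ' (Set.uIoc_subset_uIcc ht)
      rw [Real.norm_eq_abs]
      calc |c t * u t - f t| ≤ |c t * u t| + |f t| := abs_sub _ _
        _ ≤ C_c * C₀ + C_f := by
            rw [abs_mul]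
            gcongr
            · exact hcb t ht'
            · exact hC₀u t ht'
            · exact hfb t ht'
    calc |∫ t in x..ξ, (c t * u t - f t)| ≤ (C_c * C₀ + C_f) * |ξ - x| := this
      _ ≤ (C_c * C₀ + C_f) * 1 := by
          apply mul_le_mul_of_nonneg_left hdist (by positivity)
      _ = C_c * C₀ + C_f := by ring
  have hx' : x ∈ Set.Icc (0:ℝ) 1 := Set.Ioo_subset_Icc_self hx
  have hξ' : ξ ∈ Set.Icc (0:ℝ) 1 := Set.Ioo_subset_Icc_self hξ
  have hbd3 : |b ξ * u ξ - b x * u x - ∫ t in x..ξ, deriv b t * u t|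
      ≤ 2 * C_b * C₀ + C_b * γ_b * C₀ := by
    have e1 : |b ξ * u ξ| ≤ C_b * C₀ := by
      rw [abs_mul]
      exact mul_le_mul (hbb ξ hξ') (hC₀u ξ hξ') (abs_nonneg _) hCb.le
    have e2 : |b x * u x| ≤ C_b * C₀ := by
      rw [abs_mul]
      exact mul_le_mul (hbb x hx') (hC₀u x hx') (abs_nonneg _) hCb.le
    calc |b ξ * u ξ - b x * u x - ∫ t in x..ξ, deriv b t * u t|
        ≤ |b ξ * u ξ - b x * u x| + |∫ t in x..ξ, deriv b t * u t| := abs_sub _ _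
      _ ≤ (|b ξ * u ξ| + |b x * u x|) + C_b * γ_b * C₀ := add_le_add (abs_sub _ _) hbd1
      _ ≤ (C_b * C₀ + C_b * C₀) + C_b * γ_b * C₀ := by gcongr
      _ = 2 * C_b * C₀ + C_b * γ_b * C₀ := by ring
  -- conclude
  have hkey : ε₁ * |u' x| ≤ C := by
    have : |ε₁ * (u' ξ - u' x)| ≤ C := by
      rw [hmain]
      calc |ε₂ * (b ξ * u ξ - b x * u x - ∫ t in x..ξ, deriv b t * u t)
            + ∫ t in x..ξ, (c t * u t - f t)|
          ≤ |ε₂ * (b ξ * u ξ - b x * u x - ∫ t in x..ξ, deriv b t * u t)|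
            + |∫ t in x..ξ, (c t * u t - f t)| := abs_add_le _ _
        _ ≤ 1 * (2 * C_b * C₀ + C_b * γ_b * C₀) + (C_c * C₀ + C_f) := by
            rw [abs_mul]
            refine add_le_add (mul_le_mul ?_ hbd3 (abs_nonneg _) zero_le_one) hbd2
            rw [abs_of_pos hε₂0]; exact hε₂.2
        _ = C := by rw [hCdef]; ring
    have h2 : |ε₁ * (u' ξ - u' x)| = ε₁ * |u' x| := by
      rw [hξ0, abs_mul, abs_of_pos hε₁0, zero_sub, abs_neg]
    linarith [this, h2.symm.le]
  have hCpos : (0:ℝ) < C := by rw [hCdef]; positivity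
  calc |u' x| ≤ C / ε₁ := by
        rw [le_div_iff₀ hε₁0]; linarith [hkey]
    _ = C * ε₁⁻¹ := by rw [div_eq_mul_inv]
    _ ≤ C * max ε₁⁻¹ ε₂⁻¹ := by
        apply mul_le_mul_of_nonneg_left (le_max_left _ _) hCpos.le
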